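/- Frustration-free ground state characterization: let H = Σ_j P_j where each P_j = v_j v_j† is a rank-one positive semidefinite operator with v_j = t|C_j⟩ − |M(C_j)⟩ for basis states C_j and their images M(C_j) under moves M, t > 0. A vector ψ satisfies Hψ = 0 if and only if t⟨C_j|ψ⟩ = ⟨M(C_j)|ψ⟩ for all j. Moreover, if the moves act ergodically on a finite basis set 𝒞 (any two basis states are connected by a sequence of moves or inverse moves) and each move increases a volume function V by exactly 1, then the zero-energy subspace of H restricted to span(𝒞) is exactly one-dimensional, spanned by Σ_{C∈𝒞} t^{V(C)} |C⟩. -/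

import Mathlib

open Finset

/-- Frustration-free ground state characterization for
`H = Σ_j (t|C_j⟩ − |M(C_j)⟩)(t⟨C_j| − ⟨M(C_j)|)`: a state `ψ` has zero energy
iff `t⟨C_j|ψ⟩ = ⟨M(C_j)|ψ⟩` for all `j`; moreover, if the moves act ergodically
and each move increases the volume `V` by exactly `1`, the zero-energy space is
spanned by `Σ_C t^{V(C)} |C⟩` (in particular it is one-dimensional). -/
theorem frustration_free_ground_state
    {𝒞 J : Type*} [Fintype 𝒞] [DecidableEq 𝒞] [Fintype J]
    (t : ℝ) (ht : 0 < t) (src tgt : J → 𝒞)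
    (H : (𝒞 → ℂ) → (𝒞 → ℂ))
    (hH : ∀ ψ C, H ψ C = ∑ j : J,
      ((t : ℂ) * ψ (src j) - ψ (tgt j)) *
        ((t : ℂ) * (if C = src j then 1 else 0) - (if C = tgt j then 1 else 0)))
    (V : 𝒞 → ℤ) (hV : ∀ j, V (tgt j) = V (src j) + 1)
    (herg : ∀ C C' : 𝒞, Relation.ReflTransGen
      (fun a b => (∃ j, src j = a ∧ tgt j = b) ∨ (∃ j, src j = b ∧ tgt j = a)) C C') :
    (∀ ψ : 𝒞 → ℂ, H ψ = 0 ↔ ∀ j, (t : ℂ) * ψ (src j) = ψ (tgt j)) ∧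
    (∀ ψ : 𝒞 → ℂ, H ψ = 0 ↔ ∃ z : ℂ, ψ = fun C => z * (t : ℂ) ^ (V C)) := by
  have tne : (t : ℂ) ≠ 0 := Complex.ofReal_ne_zero.mpr ht.ne'
  have main : ∀ ψ : 𝒞 → ℂ, H ψ = 0 ↔ ∀ j, (t : ℂ) * ψ (src j) = ψ (tgt j) := by
    intro ψ
    constructor
    · intro h j
      have hsum : ∑ C, H ψ C * (starRingEnd ℂ) (ψ C) = 0 := by
        simp [h]
      have hsum2 : ∑ k : J, (Complex.normSq ((t : ℂ) * ψ (src k) - ψ (tgt k)) : ℂ) = 0 := by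
        rw [← hsum]
        simp only [hH, Finset.sum_mul]
        rw [Finset.sum_comm]
        refine Finset.sum_congr rfl fun k _ => ?_
        rw [← Complex.mul_conj]
        have : ∑ C : 𝒞, ((t : ℂ) * ψ (src k) - ψ (tgt k)) *
            ((t : ℂ) * (if C = src k then 1 else 0) - (if C = tgt k then 1 else 0)) *
            (starRingEnd ℂ) (ψ C)
            = ((t : ℂ) * ψ (src k) - ψ (tgt k)) *
              ((t : ℂ) * (starRingEnd ℂ) (ψ (src k)) - (starRingEnd ℂ) (ψ (tgt k))) := by
          simp only [mul_assoc, ← Finset.mul_sum]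
          congr 1
          simp [sub_mul, mul_assoc, Finset.sum_sub_distrib, Finset.mul_sum,
            ite_mul, Finset.sum_ite_eq']
        rw [this]
        congr 1
        simp [map_sub, map_mul, Complex.conj_ofReal]
      have hreal : ∑ k : J, Complex.normSq ((t : ℂ) * ψ (src k) - ψ (tgt k)) = 0 := by
        exact_mod_cast hsum2
      have hall := (Finset.sum_eq_zero_iff_of_nonneg
        (fun k _ => Complex.normSq_nonneg _)).mp hreal j (Finset.mem_univ j)
      exact sub_eq_zero.mp (Complex.normSq_eq_zero.mp hall)
    · intro h
      funext C
      rw [hH]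
      simp only [Pi.zero_apply]
      refine Finset.sum_eq_zero fun j _ => ?_
      rw [h j]
      ring
  refine ⟨main, fun ψ => (main ψ).trans ?_⟩
  constructor
  · intro h
    rcases isEmpty_or_nonempty 𝒞 with hE | hN
    · exact ⟨0, funext fun C => hE.elim C⟩
    · obtain ⟨C₀⟩ := hN
      refine ⟨ψ C₀ * (t : ℂ) ^ (-V C₀), funext fun C => ?_⟩
      have step : ∀ a b : 𝒞,
          ((∃ j, src j = a ∧ tgt j = b) ∨ (∃ j, src j = b ∧ tgt j = a)) →
          ψ a * (t : ℂ) ^ (-V a) = ψ b * (t : ℂ) ^ (-V b) := by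
        rintro a b (⟨j, rfl, rfl⟩ | ⟨j, rfl, rfl⟩)
        · rw [← h j, hV j]
          rw [show -(V (src j) + 1) = -V (src j) + (-1) by ring,
            zpow_add₀ tne, zpow_neg_one]
          field_simp
        · rw [← h j, hV j]
          rw [show -(V (src j) + 1) = -V (src j) + (-1) by ring,
            zpow_add₀ tne, zpow_neg_one]
          field_simp
      have const : ∀ a b : 𝒞, Relation.ReflTransGen
          (fun a b => (∃ j, src j = a ∧ tgt j = b) ∨ (∃ j, src j = b ∧ tgt j = a)) a b →
          ψ a * (t : ℂ) ^ (-V a) = ψ b * (t : ℂ) ^ (-V b) := by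
        intro a b hab
        induction hab with
        | refl => rfl
        | tail _ hbc ih => exact ih.trans (step _ _ hbc)
      have hc := const C₀ C (herg C₀ C)
      rw [hc, mul_assoc, ← zpow_add₀ tne]
      simp
  · rintro ⟨z, rfl⟩ j
    simp only [hV j, zpow_add₀ tne, zpow_one]
    ring
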